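/- Let m be a lawful monad, A a complete lattice, and α : m A → A an Eilenberg–Moore algebra. Then for all l, r : m ℕ, l ⊑_O r holds if and only if for every v : A and every f : ℕ → A such that for each n either f n = ⊥ or f n = v, one has α (map f l) ≤ α (map f r). -/

import Mathlib

/-- A Boolean predicate on a complete lattice is open if it maps limits of
monotone sequences of `false`-elements to `false`. -/
def IsOpenPred {A : Type} [CompleteLattice A] (P : A → Bool) : Prop :=
  ∀ a : ℕ → A, Monotone a → (∀ n : ℕ, P (a n) = false) → P (⨆ n, a n) = false

/-- A Boolean predicate is monotone if it preserves the order. -/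
def IsMonoPred {A : Type} [CompleteLattice A] (P : A → Bool) : Prop :=
  ∀ a b : A, a ≤ b → P a = true → P b = true

/-- `v' : Bool → A` sends `true` to `v` and `false` to `⊥`. -/
def boolVal {A : Type} [CompleteLattice A] (v : A) : Bool → A :=
  fun b => if b then v else ⊥

/-- The relation `⊑_O` on `m ℕ` determined by the Boolean modalities `(P, v)`
extracted from the algebra `α`. -/
def modalRel {m : Type → Type} [Monad m] {A : Type} [CompleteLattice A]
    (α : m A → A) (l r : m ℕ) : Prop :=
  ∀ (val : ℕ → Bool) (v : A) (P : A → Bool), IsMonoPred P → IsOpenPred P →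
    (P (α ((fun n => boolVal v (val n)) <$> l)) = true →
     P (α ((fun n => boolVal v (val n)) <$> r)) = true)

/-- For a lawful monad `m`, a complete lattice `A` and an
Eilenberg–Moore algebra `α : m A → A`, the relation `⊑_O` is characterised by
testing with functions `f : ℕ → {⊥, v}`. -/
theorem modalRel_characterisation
    {m : Type → Type} [Monad m] [LawfulMonad m]
    {A : Type} [CompleteLattice A] (α : m A → A)
    (hpure : ∀ a : A, α (pure a) = a)
    (hmul : ∀ t : m (m A), α (t >>= id) = α (α <$> t)) :
    ∀ l r : m ℕ, modalRel α l r ↔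
      ∀ (v : A) (f : ℕ → A), (∀ n : ℕ, f n = ⊥ ∨ f n = v) →
        α (f <$> l) ≤ α (f <$> r) := by
  classical
  intro l r
  constructor
  · intro h v f hf
    set c := α (f <$> r) with hc
    have hval : f = fun n => boolVal v (decide (f n = v)) := by
      funext n
      rcases hf n with h0 | h1
      · by_cases hv : f n = v
        · simp [boolVal, hv]
        · rw [h0] at hv ⊢; simp [boolVal, hv]
      · simp [boolVal, h1]
    have key := h (fun n => decide (f n = v)) v (fun x => decide (¬ x ≤ c))
      (fun a b hab ha => by
        simp only [decide_eq_true_eq] at *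
        exact fun hb => ha (hab.trans hb))
      (fun a _ hfalse => by
        simp only [decide_eq_false_iff_not, not_not] at *
        exact iSup_le hfalse)
    by_contra hle
    have h1 : decide (¬ α ((fun n => boolVal v (decide (f n = v))) <$> l) ≤ c) = true := by
      rw [← hval]; simpa using hle
    have h2 := key h1
    rw [← hval] at h2
    simp at h2
    exact h2 (le_of_eq hc.symm)
  · intro h val v P hmono _ hl
    exact hmono _ _ (h v (fun n => boolVal v (val n))
      (fun n => by cases hb : val n <;> simp [boolVal, hb])) hl
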